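/- Let F be a field and q ∈ F a nonzero element with q + q⁻¹ ≠ 0. Let A be an associative unital F-algebra and u ∈ A an element satisfying u² = −(q + q⁻¹)·u. Set t = q·1 + u and s = q⁻¹·1 − ((q − q⁻¹)/(q + q⁻¹))·u. Then: (1) s² · t² = 1 and t² · s² = 1 (so s² is a two-sided inverse of t², i.e. s is an inverse square root of t²); (2) t·s = s·t = 1 + (2/(q + q⁻¹))·u; and (3) (t·s)² = 1, so t·s = 1 + (2/(q+q⁻¹))·u is an involution. -/

import Mathlib

section aux
variable {F : Type*} [Field F] {A : Type*} [Ring A] [Algebra F A]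

lemma hecke_mul_aux (q : F) (u : A)
    (hu : u * u = (-(q + q⁻¹)) • u) (a b c d : F) :
    (a • (1 : A) + b • u) * (c • (1 : A) + d • u)
      = (a * c) • (1 : A) + (a * d + b * c - b * d * (q + q⁻¹)) • u := by
  simp only [add_mul, mul_add, smul_mul_assoc, mul_smul_comm, one_mul, mul_one, hu, smul_smul]
  module

end aux

/-- In any algebra with an element `u` satisfying the Hecke quadratic relation
`u² = -(q + q⁻¹) u`, the element `s = q⁻¹ - ((q - q⁻¹)/(q + q⁻¹)) u` is an inverse
square root of `t² = (q + u)²`, and `t s = s t = 1 + (2/(q + q⁻¹)) u` is an involution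
(the cactus commutor `σ_{V,V} = t₁ (t₁²)^{-1/2}`). -/
theorem hecke_commutor_involution {F : Type*} [Field F] {A : Type*} [Ring A] [Algebra F A]
    (q : F) (hq : q ≠ 0) (hq2 : q + q⁻¹ ≠ 0) (u : A)
    (hu : u * u = algebraMap F A (-(q + q⁻¹)) * u) :
    let t : A := algebraMap F A q + u
    let s : A := algebraMap F A q⁻¹ - algebraMap F A ((q - q⁻¹) / (q + q⁻¹)) * u
    (s ^ 2 * t ^ 2 = 1 ∧ t ^ 2 * s ^ 2 = 1) ∧
      (t * s = 1 + algebraMap F A (2 / (q + q⁻¹)) * u ∧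
        s * t = 1 + algebraMap F A (2 / (q + q⁻¹)) * u) ∧
      (t * s) ^ 2 = 1 := by
  intro t s
  have hq1 : q ^ 2 + 1 ≠ 0 := by
    have := mul_ne_zero hq2 hq
    rwa [add_mul, inv_mul_cancel₀ hq, ← sq] at this
  have hq3 : q + q ^ 3 ≠ 0 := by
    have : q + q ^ 3 = q * (q ^ 2 + 1) := by ring
    rw [this]; exact mul_ne_zero hq hq1
  have hq4 : (1 : F) + q ^ 2 ≠ 0 := by rwa [add_comm]
  have hq5 : q + q ^ 3 * 2 + q ^ 5 ≠ 0 := by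
    have : q + q ^ 3 * 2 + q ^ 5 = q * ((q ^ 2 + 1) * (q ^ 2 + 1)) := by ring
    rw [this]; exact mul_ne_zero hq (mul_ne_zero hq1 hq1)
  have hu' : u * u = (-(q + q⁻¹)) • u := by rw [hu, Algebra.smul_def]
  have key := hecke_mul_aux q u hu'
  have ht : t = q • (1 : A) + (1 : F) • u := by
    simp [t, Algebra.algebraMap_eq_smul_one]
  have hs : s = q⁻¹ • (1 : A) + (-((q - q⁻¹) / (q + q⁻¹))) • u := by
    simp only [s, Algebra.smul_def, map_neg, neg_mul, mul_one, sub_eq_add_neg]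
  have hrhs : 1 + algebraMap F A (2 / (q + q⁻¹)) * u
      = (1 : F) • (1 : A) + (2 / (q + q⁻¹)) • u := by
    simp [Algebra.smul_def]
  have hc1 : q * q⁻¹ = 1 := mul_inv_cancel₀ hq
  have hc2 : q * -((q - q⁻¹) / (q + q⁻¹)) + 1 * q⁻¹ - 1 * -((q - q⁻¹) / (q + q⁻¹)) * (q + q⁻¹)
      = 2 / (q + q⁻¹) := by
    field_simp
    ring_nf
  have hts : t * s = 1 + algebraMap F A (2 / (q + q⁻¹)) * u := by
    rw [ht, hs, key, hrhs, hc1, hc2]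
  have hc3 : q⁻¹ * q = 1 := inv_mul_cancel₀ hq
  have hc4 : q⁻¹ * 1 + -((q - q⁻¹) / (q + q⁻¹)) * q
        - -((q - q⁻¹) / (q + q⁻¹)) * 1 * (q + q⁻¹) = 2 / (q + q⁻¹) := by
    field_simp
    ring_nf
  have hst : s * t = 1 + algebraMap F A (2 / (q + q⁻¹)) * u := by
    rw [ht, hs, key, hrhs, hc3, hc4]
  have hc5 : (1 : F) * 1 = 1 := one_mul 1
  have hc6 : 1 * (2 / (q + q⁻¹)) + 2 / (q + q⁻¹) * 1
      - 2 / (q + q⁻¹) * (2 / (q + q⁻¹)) * (q + q⁻¹) = 0 := by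
    field_simp
    ring_nf
  have hsq : (t * s) ^ 2 = 1 := by
    rw [sq, hts, hrhs, key, hc5, hc6, zero_smul, add_zero, one_smul]
  have hcomm : t * s = s * t := hts.trans hst.symm
  refine ⟨⟨?_, ?_⟩, ⟨hts, hst⟩, hsq⟩
  · rw [sq, sq, mul_assoc s s (t * t), ← mul_assoc s t t, ← hcomm, mul_assoc t s t,
      ← mul_assoc s t (s * t), ← hcomm, ← sq, hsq]
  · rw [sq, sq, mul_assoc t t (s * s), ← mul_assoc t s s, hcomm, mul_assoc s t s,
      ← mul_assoc t s (t * s), ← sq, hsq]
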